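/- Let E be a real normed vector space, let m ≥ 1, p ≥ 1 and k ≥ 2m be integers, and set k_m = k − (k mod m). Let κ_A ≥ 0, κ_C ≥ 1, L ≥ 0 be reals, let (T_j), (D_j), (T̃_j) be sequences in E, and let (s_j) be a sequence of nonnegative reals. Assume: (i) ‖T_{k_m} − D_{k_m}‖ ≤ κ_A · Σ_{i=1}^{m} s_{k_m − i}; (ii) for every j with k_m < j ≤ k one has ‖T_j − T̃_{j−1}‖ ≤ κ_C · ‖T_{j−1} − T̃_{j−1}‖, ‖T̃_{j−1} − D_j‖ ≤ (L/2) · s_{j−1}, and ‖T̃_{j−1} − D_{j−1}‖ ≤ (L/2) · s_{j−1}. Then ‖T_k − D_k‖^{p+1} ≤ (2m−1)^p · C^{p+1} · Σ_{i=k−2m+1}^{k−1} s_i^{p+1}, where C = max( κ_C^{m−1} · κ_A , (L/2) · (1 + κ_C) · κ_C^{m−1} ). -/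

import Mathlib

/-- Error-propagation bound for an inexact `p`-th order tensor reset every `m` iterations. -/
theorem stmt_1 {E : Type*} [NormedAddCommGroup E] [NormedSpace ℝ E]
    (m p k : ℕ) (hm : 1 ≤ m) (hp : 1 ≤ p) (hk : 2 * m ≤ k)
    (κA κC L : ℝ) (hκA : 0 ≤ κA) (hκC : 1 ≤ κC) (hL : 0 ≤ L)
    (T D Tt : ℕ → E) (s : ℕ → ℝ) (hs : ∀ j, 0 ≤ s j)
    (km : ℕ) (hkm : km = k - k % m)
    (h1 : ‖T km - D km‖ ≤ κA * ∑ i ∈ Finset.Icc 1 m, s (km - i))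
    (h2 : ∀ j, km < j → j ≤ k → ‖T j - Tt (j - 1)‖ ≤ κC * ‖T (j - 1) - Tt (j - 1)‖)
    (h3 : ∀ j, km < j → j ≤ k → ‖Tt (j - 1) - D j‖ ≤ L / 2 * s (j - 1))
    (h4 : ∀ j, km < j → j ≤ k → ‖Tt (j - 1) - D (j - 1)‖ ≤ L / 2 * s (j - 1)) :
    ‖T k - D k‖ ^ (p + 1) ≤
      ((2 * m - 1 : ℕ) : ℝ) ^ p *
        max (κC ^ (m - 1) * κA) (L / 2 * (1 + κC) * κC ^ (m - 1)) ^ (p + 1) *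
        ∑ i ∈ Finset.Icc (k - 2 * m + 1) (k - 1), s i ^ (p + 1) := by
  have hκC0 : (0:ℝ) ≤ κC := le_trans zero_le_one hκC
  set r := k % m with hr
  have hrm : r < m := Nat.mod_lt _ hm
  have hrk : r ≤ k := Nat.mod_le k m
  have hkmk : km + r = k := by omega
  have hmkm : m ≤ km := by omega
  set A : ℝ := κA * ∑ i ∈ Finset.Icc 1 m, s (km - i) with hA
  set B : ℝ := L / 2 * (1 + κC) with hB
  have hAnn : 0 ≤ A := mul_nonneg hκA (Finset.sum_nonneg fun i _ => hs _)
  have hBnn : 0 ≤ B := mul_nonneg (by linarith) (by linarith)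
  -- key recursion
  have key : ∀ d, km + d ≤ k →
      ‖T (km + d) - D (km + d)‖ ≤
        κC ^ d * (A + B * ∑ l ∈ Finset.range d, s (km + l)) := by
    intro d
    induction d with
    | zero => intro _; simpa using h1
    | succ d ih =>
      intro hd
      have hd' : km + d ≤ k := by omega
      have IH := ih hd'
      set j := km + d + 1 with hj
      have hj1 : km < j := by omega
      have hj2 : j ≤ k := by omega
      have hjm : j - 1 = km + d := by omega
      have t1 : ‖T j - D j‖ ≤ ‖T j - Tt (j-1)‖ + ‖Tt (j-1) - D j‖ := by
        calc ‖T j - D j‖ = ‖(T j - Tt (j-1)) + (Tt (j-1) - D j)‖ := by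
              rw [sub_add_sub_cancel]
          _ ≤ _ := norm_add_le _ _
      have t2 : ‖T (j-1) - Tt (j-1)‖ ≤ ‖T (j-1) - D (j-1)‖ + ‖Tt (j-1) - D (j-1)‖ := by
        calc ‖T (j-1) - Tt (j-1)‖ = ‖(T (j-1) - D (j-1)) - (Tt (j-1) - D (j-1))‖ := by
              rw [sub_sub_sub_cancel_right]
          _ ≤ _ := norm_sub_le _ _
      have step : ‖T j - D j‖ ≤ κC * ‖T (j-1) - D (j-1)‖ + B * s (j-1) := by
        have e2 := h2 j hj1 hj2
        have e3 := h3 j hj1 hj2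
        have e4 := h4 j hj1 hj2
        have t2' : ‖T (j-1) - Tt (j-1)‖ ≤ ‖T (j-1) - D (j-1)‖ + L / 2 * s (j-1) :=
          le_trans t2 (by linarith)
        have t3 := mul_le_mul_of_nonneg_left t2' hκC0
        rw [hB]
        nlinarith [t3]
      rw [hjm] at step
      have hpow1 : (1:ℝ) ≤ κC ^ (d+1) := one_le_pow₀ hκC
      have hone : B * s (km + d) ≤ κC ^ (d+1) * (B * s (km + d)) := by
        nlinarith [mul_nonneg hBnn (hs (km + d))]
      have hmul : κC * ‖T (km + d) - D (km + d)‖ ≤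
          κC ^ (d+1) * (A + B * ∑ l ∈ Finset.range d, s (km + l)) := by
        have := mul_le_mul_of_nonneg_left IH hκC0
        calc κC * ‖T (km + d) - D (km + d)‖
            ≤ κC * (κC ^ d * (A + B * ∑ l ∈ Finset.range d, s (km + l))) := this
          _ = κC ^ (d+1) * (A + B * ∑ l ∈ Finset.range d, s (km + l)) := by ring
      have : km + (d+1) = j := by omega
      rw [this, Finset.sum_range_succ]
      calc ‖T j - D j‖ ≤ κC * ‖T (km+d) - D (km+d)‖ + B * s (km + d) := step
        _ ≤ κC ^ (d+1) * (A + B * ∑ l ∈ Finset.range d, s (km + l))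
              + κC ^ (d+1) * (B * s (km + d)) := add_le_add hmul hone
        _ = κC ^ (d+1) * (A + B * ((∑ l ∈ Finset.range d, s (km + l)) + s (km + d))) := by
              ring
  have hek := key r (by omega)
  rw [hkmk] at hek
  -- bound κC ^ r ≤ κC ^ (m-1)
  have hsum2nn : 0 ≤ ∑ l ∈ Finset.range r, s (km + l) :=
    Finset.sum_nonneg fun i _ => hs _
  have hinner : 0 ≤ A + B * ∑ l ∈ Finset.range r, s (km + l) := by positivity
  have hpowle : κC ^ r ≤ κC ^ (m-1) := pow_le_pow_right₀ hκC (by omega)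
  have hek2 : ‖T k - D k‖ ≤ κC ^ (m-1) * (A + B * ∑ l ∈ Finset.range r, s (km + l)) :=
    le_trans hek (mul_le_mul_of_nonneg_right hpowle hinner)
  set C : ℝ := max (κC ^ (m - 1) * κA) (L / 2 * (1 + κC) * κC ^ (m - 1)) with hC
  have hCnn : 0 ≤ C := le_trans (mul_nonneg (pow_nonneg hκC0 _) hκA) (le_max_left _ _)
  -- rewrite the two sums as one sum over Ico (km - m) k
  have hS1 : ∑ i ∈ Finset.Icc 1 m, s (km - i) = ∑ j ∈ Finset.Ico (km - m) km, s j := by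
    rw [Finset.sum_Ico_eq_sum_range]
    have hc : km - (km - m) = m := by omega
    rw [hc]
    rw [show Finset.Icc 1 m = Finset.Ico 1 (m+1) by rw [Finset.Ico_add_one_right_eq_Icc]]
    rw [Finset.sum_Ico_eq_sum_range]
    have hc2 : m + 1 - 1 = m := by omega
    rw [hc2]
    rw [← Finset.sum_range_reflect (fun i => s (km - m + i)) m]
    apply Finset.sum_congr rfl
    intro i hi
    have : i < m := Finset.mem_range.mp hi
    congr 1
    omega
  have hS2 : ∑ l ∈ Finset.range r, s (km + l) = ∑ j ∈ Finset.Ico km k, s j := by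
    rw [Finset.sum_Ico_eq_sum_range]
    have : k - km = r := by omega
    rw [this]
  have hunion : (∑ j ∈ Finset.Ico (km - m) km, s j) + ∑ j ∈ Finset.Ico km k, s j
      = ∑ j ∈ Finset.Ico (km - m) k, s j :=
    Finset.sum_Ico_consecutive _ (by omega) (by omega)
  have hsubset : ∑ j ∈ Finset.Ico (km - m) k, s j
      ≤ ∑ i ∈ Finset.Icc (k - 2*m + 1) (k - 1), s i := by
    apply Finset.sum_le_sum_of_subset_of_nonneg
    · intro x hx
      simp only [Finset.mem_Ico, Finset.mem_Icc] at *
      omega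
    · intro i _ _; exact hs i
  set Ssum : ℝ := ∑ i ∈ Finset.Icc (k - 2*m + 1) (k - 1), s i with hSs
  have hSsnn : 0 ≤ Ssum := Finset.sum_nonneg fun i _ => hs _
  have hfinal : ‖T k - D k‖ ≤ C * Ssum := by
    have e1 : κC ^ (m-1) * (A + B * ∑ l ∈ Finset.range r, s (km + l))
        = (κC ^ (m-1) * κA) * (∑ i ∈ Finset.Icc 1 m, s (km - i))
          + (B * κC ^ (m-1)) * ∑ l ∈ Finset.range r, s (km + l) := by
      rw [hA]; ring
    have b1 : (κC ^ (m-1) * κA) * (∑ i ∈ Finset.Icc 1 m, s (km - i))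
        ≤ C * ∑ i ∈ Finset.Icc 1 m, s (km - i) :=
      mul_le_mul_of_nonneg_right (le_max_left _ _)
        (Finset.sum_nonneg fun i _ => hs _)
    have b2 : (B * κC ^ (m-1)) * (∑ l ∈ Finset.range r, s (km + l))
        ≤ C * ∑ l ∈ Finset.range r, s (km + l) := by
      apply mul_le_mul_of_nonneg_right _ hsum2nn
      rw [hB]
      exact le_max_right _ _
    calc ‖T k - D k‖ ≤ κC ^ (m-1) * (A + B * ∑ l ∈ Finset.range r, s (km + l)) := hek2
      _ ≤ C * (∑ i ∈ Finset.Icc 1 m, s (km - i)) + C * ∑ l ∈ Finset.range r, s (km + l) := by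
          rw [e1]; exact add_le_add b1 b2
      _ = C * ((∑ j ∈ Finset.Ico (km - m) km, s j) + ∑ j ∈ Finset.Ico km k, s j) := by
          rw [hS1, hS2]; ring
      _ = C * ∑ j ∈ Finset.Ico (km - m) k, s j := by rw [hunion]
      _ ≤ C * Ssum := mul_le_mul_of_nonneg_left hsubset hCnn
  -- final power estimate
  have hcard : ((Finset.Icc (k - 2*m + 1) (k - 1)).card : ℝ) = ((2 * m - 1 : ℕ) : ℝ) := by
    rw [Nat.card_Icc]
    congr 1
    omega
  have hjensen : Ssum ^ (p + 1) ≤ ((2 * m - 1 : ℕ) : ℝ) ^ p *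
      ∑ i ∈ Finset.Icc (k - 2*m + 1) (k - 1), s i ^ (p + 1) := by
    have := pow_sum_le_card_mul_sum_pow (s := Finset.Icc (k - 2*m + 1) (k - 1))
      (f := s) (fun i _ => hs i) p
    rwa [hcard] at this
  calc ‖T k - D k‖ ^ (p + 1) ≤ (C * Ssum) ^ (p + 1) :=
        pow_le_pow_left₀ (norm_nonneg _) hfinal _
    _ = C ^ (p+1) * Ssum ^ (p+1) := mul_pow _ _ _
    _ ≤ C ^ (p+1) * (((2 * m - 1 : ℕ) : ℝ) ^ p *
          ∑ i ∈ Finset.Icc (k - 2*m + 1) (k - 1), s i ^ (p + 1)) :=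
        mul_le_mul_of_nonneg_left hjensen (pow_nonneg hCnn _)
    _ = ((2 * m - 1 : ℕ) : ℝ) ^ p * C ^ (p+1) *
          ∑ i ∈ Finset.Icc (k - 2*m + 1) (k - 1), s i ^ (p + 1) := by ring
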